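/- Let G = (V,E) be a finite simple graph with |V| = n ≥ 2, let G' be the split augmentation of G with n³ edge-copies, and let k be an integer with k > 2. Then G has a cut of size at least k (i.e., some S ⊆ V such that at least k edges of G have exactly one endpoint in S) if and only if there exists a partition (S₁', S₂') of the vertex set of G' with S₁' and S₂' nonempty, G'[S₁'] and G'[S₂'] both connected, and at least k·n³ edges of G' having exactly one endpoint in S₁'. -/

import Mathlib

/-- The set of edges of `G` having exactly one endpoint in `S` (the cutset `δ(S)`). -/
def cutEdges {V : Type*} (G : SimpleGraph V) (S : Set V) : Set (Sym2 V) :=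
  {e | e ∈ G.edgeSet ∧ ∃ u ∈ S, ∃ v, v ∉ S ∧ e = s(u, v)}

/-- The split augmentation of `G` with `n³` edge-copies (`n = |V|`): the original vertices
form a clique, each copy `(e, ℓ)` of an edge `e` is adjacent exactly to the two endpoints
of `e`, and the edge-copies form an independent set. -/
def splitAug {V : Type*} [Fintype V] (G : SimpleGraph V) :
    SimpleGraph (V ⊕ (G.edgeSet × Fin ((Fintype.card V) ^ 3))) :=
  SimpleGraph.fromRel (fun a b =>
    (∃ u v : V, a = Sum.inl u ∧ b = Sum.inl v) ∨
    (∃ (u : V) (p : G.edgeSet × Fin ((Fintype.card V) ^ 3)),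
      a = Sum.inl u ∧ b = Sum.inr p ∧ u ∈ (p.1 : Sym2 V)))

namespace SplitAugProof
open SimpleGraph

lemma sym2_rep {α : Type*} (z : Sym2 α) : ∃ a b, z = s(a, b) :=
  Sym2.ind (fun a b => ⟨a, b, rfl⟩) z

lemma exists_adj_of_reachable {W : Type*} {H : SimpleGraph W} {a b : W}
    (h : H.Reachable a b) (hne : a ≠ b) : ∃ c, H.Adj a c := by
  obtain ⟨w⟩ := h
  cases w with
  | nil => exact absurd rfl hne
  | cons h _ => exact ⟨_, h⟩

lemma mem_cutEdges_pair {W : Type*} {H : SimpleGraph W} {T : Set W} {a b : W}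
    (hadj : H.Adj a b) (ha : a ∈ T) (hb : b ∉ T) : s(a, b) ∈ cutEdges H T :=
  ⟨H.mem_edgeSet.2 hadj, a, ha, b, hb, rfl⟩

lemma cutEdges_pair_elim {W : Type*} {H : SimpleGraph W} {T : Set W} {a b : W}
    (h : s(a, b) ∈ cutEdges H T) :
    H.Adj a b ∧ ((a ∈ T ∧ b ∉ T) ∨ (a ∉ T ∧ b ∈ T)) := by
  obtain ⟨he, u, hu, v, hv, hequ⟩ := h
  rw [Sym2.eq_iff] at hequ
  refine ⟨H.mem_edgeSet.1 he, ?_⟩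
  rcases hequ with ⟨rfl, rfl⟩ | ⟨rfl, rfl⟩
  · exact Or.inl ⟨hu, hv⟩
  · exact Or.inr ⟨hv, hu⟩

lemma cutEdges_compl {W : Type*} (H : SimpleGraph W) (T : Set W) :
    cutEdges H Tᶜ = cutEdges H T := by
  ext e
  constructor <;> rintro ⟨he, u, hu, v, hv, rfl⟩
  · exact ⟨he, v, not_not.1 hv, u, hu, Sym2.eq_swap⟩
  · exact ⟨he, v, hv, u, not_not_intro hu, Sym2.eq_swap⟩

variable {V : Type*} [Fintype V] {G : SimpleGraph V}

lemma adj_inl_inl {u v : V} :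
    (splitAug G).Adj (Sum.inl u) (Sum.inl v) ↔ u ≠ v := by
  simp [splitAug, fromRel_adj]

lemma adj_inl_inr {u : V} {p : G.edgeSet × Fin ((Fintype.card V) ^ 3)} :
    (splitAug G).Adj (Sum.inl u) (Sum.inr p) ↔ u ∈ (p.1 : Sym2 V) := by
  simp only [splitAug, fromRel_adj]
  constructor
  · rintro ⟨-, h | h⟩
    · rcases h with ⟨a, b, -, h2⟩ | ⟨a, q, h1, h2, h3⟩
      · exact absurd h2 (by simp)
      · obtain rfl := Sum.inl.inj h1
        obtain rfl := Sum.inr.inj h2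
        exact h3
    · rcases h with ⟨a, b, h1, -⟩ | ⟨a, q, h1, -, -⟩ <;> exact absurd h1 (by simp)
  · intro hu
    exact ⟨by simp, Or.inl (Or.inr ⟨u, p, rfl, rfl, hu⟩)⟩

lemma adj_inr {p : G.edgeSet × Fin ((Fintype.card V) ^ 3)}
    {x : V ⊕ (G.edgeSet × Fin ((Fintype.card V) ^ 3))}
    (h : (splitAug G).Adj (Sum.inr p) x) :
    ∃ w, x = Sum.inl w ∧ w ∈ (p.1 : Sym2 V) := by
  rw [splitAug, fromRel_adj] at h
  obtain ⟨-, h | h⟩ := h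
  · rcases h with ⟨u, v, h1, -⟩ | ⟨u, q, h1, -⟩ <;> exact absurd h1 (by simp)
  · rcases h with ⟨u, v, -, h2⟩ | ⟨u, q, h1, h2, h3⟩
    · exact absurd h2 (by simp)
    · obtain rfl := Sum.inr.inj h2
      exact ⟨u, h1, h3⟩

lemma not_adj_inr_inr {p q : G.edgeSet × Fin ((Fintype.card V) ^ 3)} :
    ¬ (splitAug G).Adj (Sum.inr p) (Sum.inr q) := by
  intro h
  obtain ⟨w, hw, -⟩ := adj_inr h
  exact absurd hw (by simp)

lemma copy_side {T : Set (V ⊕ (G.edgeSet × Fin ((Fintype.card V) ^ 3)))}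
    (hconn : ((splitAug G).induce T).Connected)
    (hbig : 3 ≤ (cutEdges (splitAug G) T).ncard)
    {p : G.edgeSet × Fin ((Fintype.card V) ^ 3)} (hp : Sum.inr p ∈ T) :
    ∃ w, w ∈ (p.1 : Sym2 V) ∧ Sum.inl w ∈ T := by
  by_contra hcon
  push_neg at hcon
  by_cases hex : ∃ b ∈ T, b ≠ Sum.inr p
  · obtain ⟨b, hb, hbne⟩ := hex
    have hreach := hconn.preconnected ⟨Sum.inr p, hp⟩ ⟨b, hb⟩
    have hne : (⟨Sum.inr p, hp⟩ : T) ≠ ⟨b, hb⟩ := by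
      intro h
      exact hbne (congrArg Subtype.val h).symm
    obtain ⟨c, hadj⟩ := exists_adj_of_reachable hreach hne
    have hadj' : (splitAug G).Adj (Sum.inr p) c.1 := hadj
    obtain ⟨w, hw, hwmem⟩ := adj_inr hadj'
    exact hcon w hwmem (hw ▸ c.2)
  · push_neg at hex
    obtain ⟨a, b, hab⟩ := sym2_rep (p.1 : Sym2 V)
    have hsub : cutEdges (splitAug G) T ⊆
        {s(Sum.inl a, Sum.inr p), s(Sum.inl b, Sum.inr p)} := by
      rintro x ⟨he, u, hu, v, hv, rfl⟩
      obtain rfl := hex u hu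
      have hadj : (splitAug G).Adj (Sum.inr p) v := (splitAug G).mem_edgeSet.1 he
      obtain ⟨w, rfl, hw⟩ := adj_inr hadj
      rw [hab, Sym2.mem_iff] at hw
      rcases hw with rfl | rfl
      · exact Or.inl Sym2.eq_swap
      · exact Or.inr Sym2.eq_swap
    have h2 : ({s(Sum.inl a, Sum.inr p), s(Sum.inl b, Sum.inr p)} :
        Set (Sym2 (V ⊕ (G.edgeSet × Fin ((Fintype.card V) ^ 3))))).ncard ≤ 2 := by
      apply (Set.ncard_insert_le _ _).trans
      simp
    have := (Set.ncard_le_ncard hsub (Set.toFinite _)).trans h2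
    omega

lemma forward {k : ℕ} (hk : 0 < k) {S : Set V} (hS : k ≤ (cutEdges G S).ncard) :
    ∃ S₁' S₂' : Set (V ⊕ (G.edgeSet × Fin ((Fintype.card V) ^ 3))),
      S₁' ∪ S₂' = Set.univ ∧ S₁' ∩ S₂' = ∅ ∧ S₁'.Nonempty ∧ S₂'.Nonempty ∧
      ((splitAug G).induce S₁').Connected ∧ ((splitAug G).induce S₂').Connected ∧
      k * (Fintype.card V) ^ 3 ≤ (cutEdges (splitAug G) S₁').ncard := by
  classical
  have hpos : (cutEdges G S).Nonempty := by
    rw [Set.nonempty_iff_ne_empty]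
    intro h
    rw [h, Set.ncard_empty] at hS
    omega
  obtain ⟨e₀, he₀'⟩ := hpos
  obtain ⟨he₀E, u₀, hu₀, v₀, hv₀, he₀eq⟩ := he₀'
  set S₁' : Set (V ⊕ (G.edgeSet × Fin ((Fintype.card V) ^ 3))) :=
    {x | Sum.elim (· ∈ S) (fun q => ∀ w ∈ ((q.1 : Sym2 V)), w ∈ S) x} with hS₁def
  have hmem_inl : ∀ u : V, (Sum.inl u ∈ S₁') ↔ u ∈ S := fun u => Iff.rfl
  have hmem_inr : ∀ q, (Sum.inr q ∈ S₁') ↔ ∀ w ∈ ((q.1 : Sym2 V)), w ∈ S := fun q => Iff.rfl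
  refine ⟨S₁', S₁'ᶜ, Set.union_compl_self _, Set.inter_compl_self _,
    ⟨Sum.inl u₀, (hmem_inl u₀).2 hu₀⟩, ⟨Sum.inl v₀, fun h => hv₀ ((hmem_inl v₀).1 h)⟩, ?_, ?_, ?_⟩
  · rw [SimpleGraph.connected_iff]
    refine ⟨?_, ⟨⟨Sum.inl u₀, (hmem_inl u₀).2 hu₀⟩⟩⟩
    have hl : ∀ (u : V) (hu : Sum.inl u ∈ S₁'),
        ((splitAug G).induce S₁').Reachable ⟨Sum.inl u, hu⟩
          ⟨Sum.inl u₀, (hmem_inl u₀).2 hu₀⟩ := by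
      intro u hu
      by_cases h : u = u₀
      · subst h; exact Reachable.refl _
      · exact SimpleGraph.Adj.reachable (adj_inl_inl.2 h)
    have key : ∀ a : S₁', ((splitAug G).induce S₁').Reachable a
        ⟨Sum.inl u₀, (hmem_inl u₀).2 hu₀⟩ := by
      rintro ⟨a, ha⟩
      cases a with
      | inl u => exact hl u ha
      | inr q =>
        obtain ⟨aa, bb, hq⟩ := sym2_rep (q.1 : Sym2 V)
        have haa : aa ∈ (q.1 : Sym2 V) := by rw [hq]; exact Sym2.mem_iff.2 (Or.inl rfl)
        have haaS : aa ∈ S := (hmem_inr q).1 ha aa haa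
        have hadj : ((splitAug G).induce S₁').Adj ⟨Sum.inr q, ha⟩
            ⟨Sum.inl aa, (hmem_inl aa).2 haaS⟩ := (adj_inl_inr.2 haa).symm
        exact (hadj.reachable).trans (hl aa ((hmem_inl aa).2 haaS))
    intro x y
    exact (key x).trans (key y).symm
  · rw [SimpleGraph.connected_iff]
    have hv₀' : Sum.inl v₀ ∈ S₁'ᶜ := fun h => hv₀ ((hmem_inl v₀).1 h)
    refine ⟨?_, ⟨⟨Sum.inl v₀, hv₀'⟩⟩⟩
    have hl : ∀ (u : V) (hu : Sum.inl u ∈ S₁'ᶜ),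
        ((splitAug G).induce S₁'ᶜ).Reachable ⟨Sum.inl u, hu⟩ ⟨Sum.inl v₀, hv₀'⟩ := by
      intro u hu
      by_cases h : u = v₀
      · subst h; exact Reachable.refl _
      · exact SimpleGraph.Adj.reachable (adj_inl_inl.2 h)
    have key : ∀ a : (S₁'ᶜ : Set _), ((splitAug G).induce S₁'ᶜ).Reachable a
        ⟨Sum.inl v₀, hv₀'⟩ := by
      rintro ⟨a, ha⟩
      cases a with
      | inl u => exact hl u ha
      | inr q =>
        have ha' : ¬ ∀ w ∈ ((q.1 : Sym2 V)), w ∈ S := ha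
        push_neg at ha'
        obtain ⟨w, hw, hwS⟩ := ha'
        have hwc : Sum.inl w ∈ S₁'ᶜ := fun h => hwS ((hmem_inl w).1 h)
        have hadj : ((splitAug G).induce S₁'ᶜ).Adj ⟨Sum.inr q, ha⟩
            ⟨Sum.inl w, hwc⟩ := (adj_inl_inr.2 hw).symm
        exact (hadj.reachable).trans (hl w hwc)
    intro x y
    exact (key x).trans (key y).symm
  · have hchoice : ∀ e : cutEdges G S, ∃ u v : V, u ∈ S ∧ v ∉ S ∧ (e : Sym2 V) = s(u, v) := by
      rintro ⟨e, he, u, hu, v, hv, rfl⟩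
      exact ⟨u, v, hu, hv, rfl⟩
    choose fu fv hfu hfv hfe using hchoice
    have hmem : ∀ x : ↥(cutEdges G S) × Fin ((Fintype.card V) ^ 3),
        s(Sum.inl (fu x.1), (Sum.inr (⟨⟨(x.1 : Sym2 V), x.1.2.1⟩, x.2⟩) :
          V ⊕ (G.edgeSet × Fin ((Fintype.card V) ^ 3)))) ∈ cutEdges (splitAug G) S₁' := by
      intro x
      refine mem_cutEdges_pair (adj_inl_inr.2 ?_) ((hmem_inl _).2 (hfu x.1)) ?_
      · show fu x.1 ∈ (x.1 : Sym2 V)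
        rw [hfe x.1]; exact Sym2.mem_iff.2 (Or.inl rfl)
      · intro hall
        have hall' : ∀ w ∈ ((x.1 : Sym2 V)), w ∈ S := (hmem_inr _).1 hall
        exact hfv x.1 (hall' (fv x.1) (by rw [hfe x.1]; exact Sym2.mem_iff.2 (Or.inr rfl)))
    let F : ↥(cutEdges G S) × Fin ((Fintype.card V) ^ 3) → ↥(cutEdges (splitAug G) S₁') :=
      fun x => ⟨_, hmem x⟩
    have hinj : Function.Injective F := by
      rintro ⟨e, l⟩ ⟨e', l'⟩ h
      have h' := congrArg Subtype.val h
      simp only [F] at h'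
      rw [Sym2.eq_iff] at h'
      rcases h' with ⟨h1, h2⟩ | ⟨h1, h2⟩
      · obtain h3 := Sum.inr.inj h2
        have he : (e : Sym2 V) = (e' : Sym2 V) := congrArg (fun z => (z.1 : Sym2 V)) h3
        have hll : l = l' := congrArg Prod.snd h3
        exact Prod.ext (Subtype.ext he) hll
      · exact absurd h1 (by simp)
    have hle := Nat.card_le_card_of_injective F hinj
    rw [Nat.card_prod, Nat.card_coe_set_eq, Nat.card_coe_set_eq,
      Nat.card_eq_fintype_card, Fintype.card_fin] at hle
    exact le_trans (Nat.mul_le_mul_right _ hS) hle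

lemma backward (hn : 2 ≤ Fintype.card V) {k : ℕ} (hk : 2 < k)
    {S₁' S₂' : Set (V ⊕ (G.edgeSet × Fin ((Fintype.card V) ^ 3)))}
    (huniv : S₁' ∪ S₂' = Set.univ) (hdisj : S₁' ∩ S₂' = ∅)
    (hconn₁ : ((splitAug G).induce S₁').Connected)
    (hconn₂ : ((splitAug G).induce S₂').Connected)
    (hcut : k * (Fintype.card V) ^ 3 ≤ (cutEdges (splitAug G) S₁').ncard) :
    ∃ S : Set V, k ≤ (cutEdges G S).ncard := by
  classical
  have hN : 8 ≤ (Fintype.card V) ^ 3 := by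
    calc (8 : ℕ) = 2 ^ 3 := rfl
    _ ≤ _ := Nat.pow_le_pow_left hn 3
  have hbig : 3 ≤ (cutEdges (splitAug G) S₁').ncard := by
    have h1 : k ≤ k * (Fintype.card V) ^ 3 := Nat.le_mul_of_pos_right k (by omega)
    omega
  have hcompl : S₂' = S₁'ᶜ := by
    have h1 := Set.eq_univ_iff_forall.1 huniv
    have h2 := Set.eq_empty_iff_forall_notMem.1 hdisj
    ext x
    have h1x := h1 x
    have h2x := h2 x
    simp only [Set.mem_union, Set.mem_inter_iff, Set.mem_compl_iff, not_and] at h1x h2x ⊢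
    tauto
  have hside₁ : ∀ p, Sum.inr p ∈ S₁' → ∃ w, w ∈ (p.1 : Sym2 V) ∧ Sum.inl w ∈ S₁' :=
    fun p hp => copy_side hconn₁ hbig hp
  have hside₂ : ∀ p, Sum.inr p ∉ S₁' → ∃ w, w ∈ (p.1 : Sym2 V) ∧ Sum.inl w ∉ S₁' := by
    intro p hp
    have hp2 : Sum.inr p ∈ S₂' := by rw [hcompl]; exact hp
    have hbig2 : 3 ≤ (cutEdges (splitAug G) S₂').ncard := by
      rw [hcompl, cutEdges_compl]; exact hbig
    obtain ⟨w, hw1, hw2⟩ := copy_side hconn₂ hbig2 hp2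
    rw [hcompl] at hw2
    exact ⟨w, hw1, hw2⟩
  set S : Set V := {v | Sum.inl v ∈ S₁'} with hSdef
  refine ⟨S, ?_⟩
  have huniq : ∀ (u u' : V) (q : G.edgeSet × Fin ((Fintype.card V) ^ 3)),
      s(Sum.inl u, Sum.inr q) ∈ cutEdges (splitAug G) S₁' →
      s(Sum.inl u', Sum.inr q) ∈ cutEdges (splitAug G) S₁' → u = u' := by
    intro u u' q h h'
    obtain ⟨hadj, hor⟩ := cutEdges_pair_elim h
    obtain ⟨hadj', hor'⟩ := cutEdges_pair_elim h'
    have hu : u ∈ (q.1 : Sym2 V) := adj_inl_inr.1 hadj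
    have hu' : u' ∈ (q.1 : Sym2 V) := adj_inl_inr.1 hadj'
    by_contra hne
    have hq : (q.1 : Sym2 V) = s(u, u') := (Sym2.mem_and_mem_iff hne).1 ⟨hu, hu'⟩
    by_cases hq1 : Sum.inr q ∈ S₁'
    · have h1 : Sum.inl u ∉ S₁' := by
        rcases hor with ⟨-, h2⟩ | ⟨h1, -⟩
        · exact absurd hq1 h2
        · exact h1
      have h1' : Sum.inl u' ∉ S₁' := by
        rcases hor' with ⟨-, h2⟩ | ⟨h1, -⟩
        · exact absurd hq1 h2
        · exact h1
      obtain ⟨w, hw, hwin⟩ := hside₁ q hq1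
      rw [hq, Sym2.mem_iff] at hw
      rcases hw with rfl | rfl <;> contradiction
    · have h1 : Sum.inl u ∈ S₁' := by
        rcases hor with ⟨h1, -⟩ | ⟨-, h2⟩
        · exact h1
        · exact absurd h2 hq1
      have h1' : Sum.inl u' ∈ S₁' := by
        rcases hor' with ⟨h1, -⟩ | ⟨-, h2⟩
        · exact h1
        · exact absurd h2 hq1
      obtain ⟨w, hw, hwout⟩ := hside₂ q hq1
      rw [hq, Sym2.mem_iff] at hw
      rcases hw with rfl | rfl <;> contradiction
  have hmemcut : ∀ (u : V) (q : G.edgeSet × Fin ((Fintype.card V) ^ 3)),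
      s(Sum.inl u, Sum.inr q) ∈ cutEdges (splitAug G) S₁' →
      ((q.1 : Sym2 V)) ∈ cutEdges G S := by
    intro u q h
    obtain ⟨hadj, hor⟩ := cutEdges_pair_elim h
    have hu : u ∈ (q.1 : Sym2 V) := adj_inl_inr.1 hadj
    rcases hor with ⟨h1, h2⟩ | ⟨h1, h2⟩
    · obtain ⟨w, hw, hwn⟩ := hside₂ q h2
      have hne : u ≠ w := fun hh => hwn (hh ▸ h1)
      exact ⟨q.1.2, u, h1, w, hwn, ((Sym2.mem_and_mem_iff hne).1 ⟨hu, hw⟩)⟩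
    · obtain ⟨w, hw, hwin⟩ := hside₁ q h2
      have hne : w ≠ u := fun hh => h1 (hh ▸ hwin)
      exact ⟨q.1.2, w, hwin, u, h1, ((Sym2.mem_and_mem_iff hne).1 ⟨hw, hu⟩)⟩
  set A := cutEdges (splitAug G) S₁' ∩ {x | ∃ u v : V, x = s(Sum.inl u, Sum.inl v)} with hAdef
  set B := cutEdges (splitAug G) S₁' ∩
      {x | ∃ (u : V) (q : G.edgeSet × Fin ((Fintype.card V) ^ 3)),
        x = s(Sum.inl u, Sum.inr q)} with hBdef
  have hAB : cutEdges (splitAug G) S₁' ⊆ A ∪ B := by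
    intro x hx
    have hx' := hx
    obtain ⟨he, u, hu, v, hv, hxe⟩ := hx
    subst hxe
    cases u with
    | inl a =>
      cases v with
      | inl b => exact Or.inl ⟨hx', a, b, rfl⟩
      | inr q => exact Or.inr ⟨hx', a, q, rfl⟩
    | inr p =>
      cases v with
      | inl b => exact Or.inr ⟨hx', b, p, Sym2.eq_swap⟩
      | inr q => exact absurd ((splitAug G).mem_edgeSet.1 he) not_adj_inr_inr
  have hA : A.ncard ≤ Fintype.card V * Fintype.card V := by
    have hArange : A ⊆ Set.range (Sym2.map (Sum.inl :
        V → V ⊕ (G.edgeSet × Fin ((Fintype.card V) ^ 3)))) := by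
      rintro x ⟨-, u, v, rfl⟩
      exact ⟨s(u, v), Sym2.map_pair_eq _ _ _⟩
    have h1 : A.ncard ≤ (Set.range (Sym2.map (Sum.inl :
        V → V ⊕ (G.edgeSet × Fin ((Fintype.card V) ^ 3))))).ncard :=
      Set.ncard_le_ncard hArange (Set.toFinite _)
    have h2 : (Set.range (Sym2.map (Sum.inl :
        V → V ⊕ (G.edgeSet × Fin ((Fintype.card V) ^ 3))))).ncard ≤ Nat.card (Sym2 V) := by
      rw [← Nat.card_coe_set_eq]
      exact Nat.card_le_card_of_surjective _ Set.rangeFactorization_surjective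
    have hsurj : Function.Surjective (fun z : V × V => s(z.1, z.2)) := by
      intro z
      obtain ⟨a, b, rfl⟩ := sym2_rep z
      exact ⟨(a, b), rfl⟩
    have h3 := Nat.card_le_card_of_surjective _ hsurj
    rw [Nat.card_prod] at h3
    simp only [Nat.card_eq_fintype_card] at h2 h3
    omega
  have hB : B.ncard ≤ (cutEdges G S).ncard * (Fintype.card V) ^ 3 := by
    have hBex : ∀ x : ↥B, ∃ (u : V) (q : G.edgeSet × Fin ((Fintype.card V) ^ 3)),
        (x : Sym2 (V ⊕ (G.edgeSet × Fin ((Fintype.card V) ^ 3)))) = s(Sum.inl u, Sum.inr q) :=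
      fun x => x.2.2
    choose gu gq hg using hBex
    have hmem' : ∀ x : ↥B, s(Sum.inl (gu x), Sum.inr (gq x)) ∈ cutEdges (splitAug G) S₁' := by
      intro x
      rw [← hg x]
      exact x.2.1
    let Φ : ↥B → ↥(cutEdges G S) × Fin ((Fintype.card V) ^ 3) :=
      fun x => (⟨((gq x).1 : Sym2 V), hmemcut _ _ (hmem' x)⟩, (gq x).2)
    have hΦinj : Function.Injective Φ := by
      intro x y h
      have h1 : ((gq x).1 : Sym2 V) = ((gq y).1 : Sym2 V) :=
        congrArg (fun z : ↥(cutEdges G S) × Fin ((Fintype.card V) ^ 3) => z.1.val) h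
      have h2 : (gq x).2 = (gq y).2 :=
        congrArg (fun z : ↥(cutEdges G S) × Fin ((Fintype.card V) ^ 3) => z.2) h
      have hq : gq x = gq y := Prod.ext (Subtype.ext h1) h2
      have hmy : s(Sum.inl (gu y), Sum.inr (gq x)) ∈ cutEdges (splitAug G) S₁' := by
        rw [hq]; exact hmem' y
      have hu : gu x = gu y := huniq _ _ _ (hmem' x) hmy
      apply Subtype.ext
      rw [hg x, hg y, hq, hu]
    have hBle := Nat.card_le_card_of_injective Φ hΦinj
    rwa [Nat.card_prod, Nat.card_coe_set_eq, Nat.card_coe_set_eq,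
      Nat.card_eq_fintype_card, Fintype.card_fin] at hBle
  have hcount : (cutEdges (splitAug G) S₁').ncard ≤ A.ncard + B.ncard :=
    le_trans (Set.ncard_le_ncard hAB (Set.toFinite _)) (Set.ncard_union_le _ _)
  by_contra hlt
  push_neg at hlt
  have hstep : ((cutEdges G S).ncard + 1) * (Fintype.card V) ^ 3 ≤ k * (Fintype.card V) ^ 3 :=
    Nat.mul_le_mul_right _ (by omega)
  have hn3 : 2 * (Fintype.card V * Fintype.card V) ≤ (Fintype.card V) ^ 3 := by
    have : (Fintype.card V) ^ 3 = Fintype.card V * (Fintype.card V * Fintype.card V) := by ring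
    rw [this]
    exact Nat.mul_le_mul_right _ hn
  nlinarith [hcut, hcount, hA, hB, hstep, hN]

end SplitAugProof

theorem stmt3 {V : Type*} [Fintype V] (G : SimpleGraph V)
    (hn : 2 ≤ Fintype.card V) (k : ℕ) (hk : 2 < k) :
    (∃ S : Set V, k ≤ (cutEdges G S).ncard) ↔
      (∃ S₁' S₂' : Set (V ⊕ (G.edgeSet × Fin ((Fintype.card V) ^ 3))),
        S₁' ∪ S₂' = Set.univ ∧ S₁' ∩ S₂' = ∅ ∧
        S₁'.Nonempty ∧ S₂'.Nonempty ∧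
        ((splitAug G).induce S₁').Connected ∧ ((splitAug G).induce S₂').Connected ∧
        k * (Fintype.card V) ^ 3 ≤ (cutEdges (splitAug G) S₁').ncard) := by
  constructor
  · rintro ⟨S, hS⟩
    exact SplitAugProof.forward (by omega) hS
  · rintro ⟨S₁', S₂', huniv, hdisj, hne₁, hne₂, hconn₁, hconn₂, hcut⟩
    exact SplitAugProof.backward hn hk huniv hdisj hconn₁ hconn₂ hcut
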